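/- Let (X, d) be a complete metric space, X = X_1 ∪ ... ∪ X_m (m ≥ 3) a covering by nonempty closed sets, 1 ≤ r < m, and f : X → X an asynchronous r-cyclic contraction with constant c ∈ [0,1): f(X_i) ⊆ X_{i+r} and d(f(x), f(y)) ≤ c·d(x, y) for all x ∈ X_i, y ∈ X_{i+1}, indices mod m. Then f has a unique fixed point in X, obtainable as the limit of the Picard iteration from any starting point in X. -/

import Mathlib

open Filter Topology

theorem asynchronous_r_cyclic_contraction_Picard {α : Type*} [MetricSpace α] [CompleteSpace α]
    (m r : ℕ) (hm : 3 ≤ m) (hr : 1 ≤ r) (hrm : r < m)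
    (X : ZMod m → Set α) (hne : ∀ i, (X i).Nonempty) (hcl : ∀ i, IsClosed (X i))
    (hcov : (⋃ i, X i) = Set.univ) (f : α → α)
    (hcyc : ∀ i, ∀ x ∈ X i, f x ∈ X (i + (r : ZMod m)))
    (c : ℝ) (hc0 : 0 ≤ c) (hc1 : c < 1)
    (hcontr : ∀ i, ∀ x ∈ X i, ∀ y ∈ X (i + 1), dist (f x) (f y) ≤ c * dist x y) :
    ∃ xs : α, f xs = xs ∧ (∀ y, f y = y → y = xs) ∧
      ∀ x₀ : α, Tendsto (fun n => f^[n] x₀) atTop (𝓝 xs) := by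
  classical
  haveI : NeZero m := ⟨by omega⟩
  -- membership of iterates
  have hmem : ∀ n (i : ZMod m), ∀ x ∈ X i, f^[n] x ∈ X (i + ((n * r : ℕ) : ZMod m)) := by
    intro n
    induction n with
    | zero => intro i x hx; simpa using hx
    | succ n ih =>
      intro i x hx
      rw [Function.iterate_succ_apply']
      have h := hcyc _ _ (ih i x hx)
      have : (i + ((n * r : ℕ) : ZMod m)) + (r : ZMod m) = i + (((n+1) * r : ℕ) : ZMod m) := by
        push_cast; ring
      rwa [this] at h
  -- iterated contraction for consecutive sets
  have L1 : ∀ n (i : ZMod m), ∀ x ∈ X i, ∀ y ∈ X (i + 1),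
      dist (f^[n] x) (f^[n] y) ≤ c ^ n * dist x y := by
    intro n
    induction n with
    | zero => intro i x _ y _; simp
    | succ n ih =>
      intro i x hx y hy
      rw [Function.iterate_succ_apply', Function.iterate_succ_apply']
      have h1 := hmem n i x hx
      have h2 : f^[n] y ∈ X ((i + ((n * r : ℕ) : ZMod m)) + 1) := by
        have := hmem n (i + 1) y hy
        have e : (i + 1) + ((n * r : ℕ) : ZMod m) = (i + ((n * r : ℕ) : ZMod m)) + 1 := by ring
        rwa [e] at this
      calc dist (f (f^[n] x)) (f (f^[n] y)) ≤ c * dist (f^[n] x) (f^[n] y) :=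
            hcontr _ _ h1 _ h2
        _ ≤ c * (c ^ n * dist x y) :=
            mul_le_mul_of_nonneg_left (ih i x hx y hy) hc0
        _ = c ^ (n + 1) * dist x y := by ring
  -- pick a point in each set
  choose p hp using hne
  set q : ℕ → α := fun j => p (j : ZMod m) with hq
  have hqmem : ∀ j : ℕ, q j ∈ X ((j : ZMod m)) := fun j => hp _
  have hconsec : ∀ n j : ℕ, dist (f^[n] (q j)) (f^[n] (q (j+1))) ≤ c ^ n * dist (q j) (q (j+1)) := by
    intro n j
    have h2 : q (j+1) ∈ X ((j : ZMod m) + 1) := by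
      have := hqmem (j+1); push_cast at this; exact this
    exact L1 n _ _ (hqmem j) _ h2
  -- chain estimate
  have hchain : ∀ n s : ℕ, dist (f^[n] (q 0)) (f^[n] (q s)) ≤
      c ^ n * (Finset.range s).sum (fun j => dist (q j) (q (j+1))) := by
    intro n s
    induction s with
    | zero => simp
    | succ s ih =>
      calc dist (f^[n] (q 0)) (f^[n] (q (s+1)))
          ≤ dist (f^[n] (q 0)) (f^[n] (q s)) + dist (f^[n] (q s)) (f^[n] (q (s+1))) :=
            dist_triangle _ _ _
        _ ≤ c ^ n * (Finset.range s).sum (fun j => dist (q j) (q (j+1)))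
              + c ^ n * dist (q s) (q (s+1)) := add_le_add ih (hconsec n s)
        _ = c ^ n * (Finset.range (s+1)).sum (fun j => dist (q j) (q (j+1))) := by
            rw [Finset.sum_range_succ]; ring
  set a : ℕ → α := fun n => f^[n] (q 0) with ha
  -- a_(n+1) compared to f^[n] of q (r+1)
  have hfq0 : f (q 0) ∈ X ((r : ZMod m)) := by
    have := hcyc _ _ (hqmem 0)
    simpa using this
  have hstep : ∀ n, dist (f^[n] (q (r+1))) (a (n+1)) ≤ c ^ n * dist (f (q 0)) (q (r+1)) := by
    intro n
    have h2 : q (r+1) ∈ X ((r : ZMod m) + 1) := by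
      have := hqmem (r+1); push_cast at this; exact this
    have := L1 n ((r : ZMod m)) _ hfq0 _ h2
    rw [dist_comm] at this
    simpa [ha, Function.iterate_succ_apply] using this
  set K : ℝ := (Finset.range (r+1)).sum (fun j => dist (q j) (q (j+1))) + dist (f (q 0)) (q (r+1)) with hK
  have hCau : CauchySeq a := by
    apply cauchySeq_of_le_geometric c K hc1
    intro n
    calc dist (a n) (a (n+1)) ≤ dist (a n) (f^[n] (q (r+1))) + dist (f^[n] (q (r+1))) (a (n+1)) :=
          dist_triangle _ _ _
      _ ≤ c ^ n * (Finset.range (r+1)).sum (fun j => dist (q j) (q (j+1)))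
            + c ^ n * dist (f (q 0)) (q (r+1)) := add_le_add (hchain n (r+1)) (hstep n)
      _ = K * c ^ n := by rw [hK]; ring
  obtain ⟨xs, hxs⟩ := cauchySeq_tendsto_of_complete hCau
  -- the sequences started at each q j all tend to xs
  have hcn : Tendsto (fun n => c ^ n) atTop (𝓝 (0:ℝ)) :=
    tendsto_pow_atTop_nhds_zero_of_lt_one hc0 hc1
  have htend : ∀ j : ℕ, Tendsto (fun n => f^[n] (q j)) atTop (𝓝 xs) := by
    intro j
    induction j with
    | zero => exact hxs
    | succ j ih =>
      rw [tendsto_iff_dist_tendsto_zero]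
      have hle : ∀ n, dist (f^[n] (q (j+1))) xs ≤
          c ^ n * dist (q j) (q (j+1)) + dist (f^[n] (q j)) xs := by
        intro n
        calc dist (f^[n] (q (j+1))) xs ≤ dist (f^[n] (q (j+1))) (f^[n] (q j)) + dist (f^[n] (q j)) xs :=
              dist_triangle _ _ _
          _ ≤ c ^ n * dist (q j) (q (j+1)) + dist (f^[n] (q j)) xs := by
              rw [dist_comm (f^[n] (q (j+1)))]
              exact add_le_add_left (hconsec n j) _
      have h0 : Tendsto (fun n => c ^ n * dist (q j) (q (j+1)) + dist (f^[n] (q j)) xs) atTop (𝓝 0) := by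
        have := (hcn.mul_const (dist (q j) (q (j+1)))).add
          ((tendsto_iff_dist_tendsto_zero.mp ih))
        simpa using this
      exact squeeze_zero (fun n => dist_nonneg) hle h0
  -- xs lies in every X i
  have hXs : ∀ i : ZMod m, xs ∈ X i := by
    intro i
    have hsub : Tendsto (fun k : ℕ => f^[k * m] (q i.val)) atTop (𝓝 xs) :=
      (htend i.val).comp (Filter.tendsto_atTop_atTop.mpr
        (fun b => ⟨b, fun k hk => le_trans hk (Nat.le_mul_of_pos_right k (by omega))⟩))
    refine (hcl i).mem_of_tendsto hsub (Filter.Eventually.of_forall (fun k => ?_))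
    have := hmem (k * m) (i.val : ZMod m) _ (hqmem i.val)
    have e : ((i.val : ZMod m)) + ((k * m * r : ℕ) : ZMod m) = i := by
      push_cast
      simp [ZMod.natCast_val, ZMod.natCast_self]
    rwa [e] at this
  -- fixed point
  have hfix : f xs = xs := by
    have h1 : Tendsto (fun n => f (a n)) atTop (𝓝 (f xs)) := by
      rw [tendsto_iff_dist_tendsto_zero]
      have hle : ∀ n, dist (f (a n)) (f xs) ≤ c * dist (a n) xs := by
        intro n
        have hxm : xs ∈ X ((0 : ZMod m) + ((n * r : ℕ) : ZMod m) + 1) := hXs _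
        exact hcontr _ _ (hmem n 0 _ (by simpa using hqmem 0)) _ hxm
      have h0 : Tendsto (fun n => c * dist (a n) xs) atTop (𝓝 0) := by
        have := (tendsto_iff_dist_tendsto_zero.mp hxs).const_mul c
        simpa using this
      exact squeeze_zero (fun n => dist_nonneg) hle h0
    have h2 : Tendsto (fun n => f (a n)) atTop (𝓝 xs) := by
      have : (fun n => f (a n)) = fun n => a (n+1) := by
        funext n; simp [ha, Function.iterate_succ_apply']
      rw [this]
      exact hxs.comp (tendsto_add_atTop_nat 1)
    exact tendsto_nhds_unique h1 h2
  refine ⟨xs, hfix, ?_, ?_⟩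
  · intro y hy
    obtain ⟨i, hyi⟩ : ∃ i, y ∈ X i := by
      have : y ∈ ⋃ i, X i := by rw [hcov]; trivial
      exact Set.mem_iUnion.mp this
    have := hcontr i _ hyi _ (hXs (i+1))
    rw [hy, hfix] at this
    have hd0 : dist y xs = 0 := by nlinarith [dist_nonneg (x := y) (y := xs)]
    exact dist_eq_zero.mp hd0
  · intro x₀
    obtain ⟨i, hx0⟩ : ∃ i, x₀ ∈ X i := by
      have : x₀ ∈ ⋃ i, X i := by rw [hcov]; trivial
      exact Set.mem_iUnion.mp this
    rw [tendsto_iff_dist_tendsto_zero]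
    have hle : ∀ n, dist (f^[n] x₀) xs ≤ c ^ n * dist x₀ xs := by
      intro n
      have := L1 n i _ hx0 _ (hXs (i+1))
      rwa [Function.iterate_fixed hfix] at this
    have h0 : Tendsto (fun n => c ^ n * dist x₀ xs) atTop (𝓝 0) := by
      simpa using hcn.mul_const (dist x₀ xs)
    exact squeeze_zero (fun n => dist_nonneg) hle h0
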